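/- Let d ≥ 3 and φ : U_d → GL_d(ℂ) be a homomorphism from the unipotent upper triangular subgroup such that φ(E_{ij}) is unipotent for all i < j and φ(E_{1d}) ≠ id. Then the matrix φ(E_{1d}) − id has rank 1. -/

import Mathlib

open Matrix

section MatrixLemmas

variable {n : Type*} [Fintype n] [DecidableEq n] {R : Type*} [CommRing R]

private lemma transvection_braid' {i j k : n} (hij : i ≠ j) (hjk : j ≠ k) (hik : i ≠ k) :
    transvection i j (1:R) * transvection j k 1
      = transvection j k 1 * transvection i j 1 * transvection i k 1 := by
  simp only [transvection, add_mul, mul_add, one_mul, mul_one,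
    single_mul_single_same, single_mul_single_of_ne _ _ _ _ hjk.symm,
    single_mul_single_of_ne _ _ _ _ hij.symm, single_mul_single_of_ne _ _ _ _ hik.symm,
    single_mul_single_of_ne _ _ _ _ hik, single_mul_single_of_ne _ _ _ _ hij,
    single_mul_single_of_ne _ _ _ _ hjk, one_mul, add_zero, zero_add]
  abel

private lemma transvection_comm' {i j k l : n} (hjk : j ≠ k) (hli : l ≠ i) :
    transvection i j (1:R) * transvection k l 1 = transvection k l 1 * transvection i j 1 := by
  simp only [transvection, add_mul, mul_add, one_mul, mul_one,
    single_mul_single_of_ne _ _ _ _ hjk, single_mul_single_of_ne _ _ _ _ hli, add_zero]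
  abel

end MatrixLemmas

/-- The elementary matrix `E i j` (for `i ≠ j`) in `SL_d(ℤ)`. -/
def Emat (d : ℕ) (i j : Fin d) (h : i ≠ j) : Matrix.SpecialLinearGroup (Fin d) ℤ :=
  ⟨Matrix.transvection i j 1, Matrix.det_transvection_of_ne i j h 1⟩

/-- The subgroup `U_d ≤ SL_d(ℤ)` of unipotent upper triangular matrices, i.e. the subgroup
generated by the elementary matrices `E i j` with `i < j`. -/
def unipotentUpper (d : ℕ) : Subgroup (Matrix.SpecialLinearGroup (Fin d) ℤ) :=
  Subgroup.closure { A | ∃ (i j : Fin d) (h : i < j), A = Emat d i j h.ne }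

/-- The elementary matrix `E i j` (for `i < j`) as an element of `U_d`. -/
def EU (d : ℕ) (i j : Fin d) (h : i < j) : unipotentUpper d :=
  ⟨Emat d i j h.ne, Subgroup.subset_closure ⟨i, j, h, rfl⟩⟩

section EULemmas

variable {d : ℕ}

private lemma EU_braid {i j k : Fin d} (hij : i < j) (hjk : j < k) :
    EU d i j hij * EU d j k hjk
      = EU d j k hjk * EU d i j hij * EU d i k (hij.trans hjk) := by
  apply Subtype.ext; apply Subtype.ext
  push_cast [EU, Emat]
  exact transvection_braid' hij.ne hjk.ne (hij.trans hjk).ne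

private lemma EU_comm {i j k l : Fin d} (hij : i < j) (hkl : k < l) (hjk : j ≠ k)
    (hli : l ≠ i) :
    EU d i j hij * EU d k l hkl = EU d k l hkl * EU d i j hij := by
  apply Subtype.ext; apply Subtype.ext
  push_cast [EU, Emat]
  exact transvection_comm' hjk hli

end EULemmas

section CommonKernel

variable {V : Type*} [AddCommGroup V] [Module ℂ V] {ι : Type*} [DecidableEq ι]

private lemma exists_common_nilpotent (s : Finset ι) (T : ι → Module.End ℂ V)
    (X U : Submodule ℂ V)
    (hX : ∀ i ∈ s, ∀ x ∈ X, T i x ∈ X)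
    (hU : ∀ i ∈ s, ∀ u ∈ U, T i u ∈ U)
    (hnil : ∀ i ∈ s, IsNilpotent (T i))
    (hcomm : ∀ i ∈ s, ∀ j ∈ s, ∀ x ∈ X, T i (T j x) - T j (T i x) ∈ U)
    (hex : ∃ x ∈ X, x ∉ U) :
    ∃ x ∈ X, x ∉ U ∧ ∀ i ∈ s, T i x ∈ U := by
  classical
  induction s using Finset.induction_on with
  | empty =>
    obtain ⟨x, hx, hxu⟩ := hex
    exact ⟨x, hx, hxu, by simp⟩
  | insert _ _ ha ih =>
    rename_i a s
    obtain ⟨x₀, hx₀X, hx₀U, hx₀T⟩ := ih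
      (fun i hi => hX i (Finset.mem_insert_of_mem hi))
      (fun i hi => hU i (Finset.mem_insert_of_mem hi))
      (fun i hi => hnil i (Finset.mem_insert_of_mem hi))
      (fun i hi j hj => hcomm i (Finset.mem_insert_of_mem hi) j (Finset.mem_insert_of_mem hj))
    have haIn : a ∈ insert a s := Finset.mem_insert_self a s
    set Y : Submodule ℂ V := X ⊓ ⨅ i ∈ s, Submodule.comap (T i) U with hY
    have memY : ∀ y, y ∈ Y ↔ y ∈ X ∧ ∀ i ∈ s, T i y ∈ U := by
      intro y
      simp [hY, Submodule.mem_iInf]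
    have hx₀Y : x₀ ∈ Y := (memY x₀).2 ⟨hx₀X, hx₀T⟩
    have hTY : ∀ y ∈ Y, T a y ∈ Y := by
      intro y hy
      rw [memY] at hy ⊢
      refine ⟨hX a haIn y hy.1, fun i hi => ?_⟩
      have h1 : T i (T a y) - T a (T i y) ∈ U :=
        hcomm i (Finset.mem_insert_of_mem hi) a haIn y hy.1
      have h2 : T a (T i y) ∈ U := hU a haIn _ (hy.2 i hi)
      have := add_mem h1 h2
      simpa using this
    obtain ⟨n, hn⟩ := hnil a haIn
    have hpowY : ∀ m : ℕ, ((T a) ^ m) x₀ ∈ Y := by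
      intro m
      induction m with
      | zero => simpa using hx₀Y
      | succ m ihm =>
        rw [pow_succ']
        exact hTY _ ihm
    have hexm : ∃ m : ℕ, ((T a) ^ m) x₀ ∈ U := ⟨n, by rw [hn]; simp⟩
    let m := Nat.find hexm
    have hmU : ((T a) ^ m) x₀ ∈ U := Nat.find_spec hexm
    have hm0 : m ≠ 0 := by
      intro h
      apply hx₀U
      simpa [h] using hmU
    obtain ⟨n', hn'⟩ : ∃ n', m = n' + 1 := ⟨m - 1, by omega⟩
    have hmpred : ¬ (((T a) ^ n') x₀ ∈ U) := Nat.find_min hexm (by omega)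
    refine ⟨((T a) ^ n') x₀, ((memY _).1 (hpowY n')).1, hmpred, ?_⟩
    intro i hi
    rcases Finset.mem_insert.1 hi with rfl | hi'
    · have heq : T i (((T i) ^ n') x₀) = ((T i) ^ m) x₀ := by
        rw [hn', pow_succ']
        rfl
      rw [heq]
      exact hmU
    · exact ((memY _).1 (hpowY n')).2 i hi'

end CommonKernel

namespace RankOneAux

variable {d : ℕ} (φ : unipotentUpper d →* GL (Fin d) ℂ)

/-- The representation by linear endomorphisms of `ℂ^d`. -/
noncomputable def rho (g : unipotentUpper d) : Module.End ℂ (Fin d → ℂ) :=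
  Matrix.mulVecLin (φ g : Matrix (Fin d) (Fin d) ℂ)

lemma rho_mul (g h : unipotentUpper d) (v : Fin d → ℂ) :
    rho φ (g * h) v = rho φ g (rho φ h v) := by
  simp only [rho, _root_.map_mul, Units.val_mul, Matrix.mulVecLin_mul, LinearMap.comp_apply]

lemma rho_one (v : Fin d → ℂ) : rho φ 1 v = v := by
  simp only [rho, _root_.map_one, Units.val_one, Matrix.mulVecLin_one, LinearMap.id_apply]

lemma key_split (g h : unipotentUpper d) (v : Fin d → ℂ) :
    (rho φ (g * h) - 1) v = rho φ g ((rho φ h - 1) v) + (rho φ g - 1) v := by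
  simp only [LinearMap.sub_apply, Module.End.one_apply, map_sub, rho_mul]
  abel

lemma key_conj (g h : unipotentUpper d) (v : Fin d → ℂ) :
    (rho φ g - 1) (rho φ h v) = rho φ h ((rho φ (h⁻¹ * (g * h)) - 1) v) := by
  simp only [LinearMap.sub_apply, Module.End.one_apply, map_sub, ← rho_mul,
    mul_inv_cancel_left]

lemma key_inv (g : unipotentUpper d) (v : Fin d → ℂ) :
    (rho φ g⁻¹ - 1) v = -(rho φ g⁻¹ ((rho φ g - 1) v)) := by
  simp only [LinearMap.sub_apply, Module.End.one_apply, map_sub, ← rho_mul,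
    inv_mul_cancel, rho_one]
  abel

lemma key_comm2 (x y : unipotentUpper d) (v : Fin d → ℂ) :
    (rho φ x - 1) ((rho φ y - 1) v) - (rho φ y - 1) ((rho φ x - 1) v)
      = rho φ (x * y) v - rho φ (y * x) v := by
  simp only [LinearMap.sub_apply, Module.End.one_apply, map_sub, ← rho_mul]
  abel

lemma key_step (g z : unipotentUpper d) (x : Fin d → ℂ) :
    rho φ (g * z) x - rho φ g x = rho φ g ((rho φ z - 1) x) := by
  simp only [LinearMap.sub_apply, Module.End.one_apply, map_sub, ← rho_mul]

lemma key_sub (g : unipotentUpper d) (v : Fin d → ℂ) :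
    (rho φ g - 1) v = rho φ g v - v := by
  simp only [LinearMap.sub_apply, Module.End.one_apply]

lemma mulVecLin_pow (A : Matrix (Fin d) (Fin d) ℂ) (m : ℕ) :
    Matrix.mulVecLin (A ^ m) = (Matrix.mulVecLin A) ^ m := by
  induction m with
  | zero => rw [pow_zero, pow_zero, Matrix.mulVecLin_one]; rfl
  | succ m ih => rw [pow_succ, pow_succ, Matrix.mulVecLin_mul, ih]; rfl

lemma rho_sub_one_eq (g : unipotentUpper d) :
    rho φ g - 1 = Matrix.mulVecLin ((φ g : Matrix (Fin d) (Fin d) ℂ) - 1) := by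
  have h2 : ((φ g : Matrix (Fin d) (Fin d) ℂ) - 1)
      = (φ g : Matrix (Fin d) (Fin d) ℂ) + (-1) := by
    rw [sub_eq_add_neg]
  rw [h2, Matrix.mulVecLin_add, rho]
  congr 1
  ext v w
  simp [Matrix.neg_apply, Matrix.one_apply, sub_eq_add_neg, Pi.single_apply]

lemma rho_sub_one_nilp
    (hunip : ∀ (i j : Fin d) (h : i < j),
      IsNilpotent ((φ (EU d i j h) : Matrix (Fin d) (Fin d) ℂ) - 1))
    (i j : Fin d) (hij : i < j) : IsNilpotent (rho φ (EU d i j hij) - 1) := by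
  obtain ⟨m, hm⟩ := hunip i j hij
  refine ⟨m, ?_⟩
  rw [rho_sub_one_eq, ← mulVecLin_pow, hm, Matrix.mulVecLin_zero]

/-- The canonical ascending chain of submodules. -/
noncomputable def Uc : ℕ → Submodule ℂ (Fin d → ℂ)
  | 0 => ⊥
  | k + 1 => ⨅ g : unipotentUpper d, Submodule.comap (rho φ g - 1) (Uc k)

lemma mem_Uc_succ {k : ℕ} {v : Fin d → ℂ} :
    v ∈ Uc φ (k + 1) ↔ ∀ g : unipotentUpper d, (rho φ g - 1) v ∈ Uc φ k := by
  simp only [Uc, Submodule.mem_iInf, Submodule.mem_comap]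

lemma Uc_inv : ∀ (k : ℕ) (g : unipotentUpper d) (v : Fin d → ℂ),
    v ∈ Uc φ k → rho φ g v ∈ Uc φ k := by
  intro k
  induction k with
  | zero => intro g v hv; rw [Uc, Submodule.mem_bot] at *; rw [hv, map_zero]
  | succ k ih =>
    intro g v hv
    rw [mem_Uc_succ] at *
    intro g₀
    rw [key_conj]
    exact ih g _ (hv _)

lemma Uc_mono_succ : ∀ k : ℕ, Uc φ k ≤ Uc φ (k + 1) := by
  intro k
  induction k with
  | zero => exact bot_le
  | succ k ih =>
    intro v hv
    rw [mem_Uc_succ] at *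
    exact fun g => ih (hv g)

lemma Uc_mono : Monotone (Uc φ) := monotone_nat_of_le_succ (Uc_mono_succ φ)

/-- The filtration predicate: `rho g - 1` shifts the chain down by `c`. -/
def Pdef (c : ℕ) (g : unipotentUpper d) : Prop :=
  ∀ (k : ℕ) (v : Fin d → ℂ), v ∈ Uc φ k → (rho φ g - 1) v ∈ Uc φ (k - c)

lemma P_one (g : unipotentUpper d) : Pdef φ 1 g := by
  intro k v hv
  cases k with
  | zero =>
    rw [Uc, Submodule.mem_bot] at hv
    simp [hv]
  | succ k =>
    rw [mem_Uc_succ] at hv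
    simpa using hv g

lemma P_braid {x y z : unipotentUpper d} {p q : ℕ} (hxy : x * y = y * x * z)
    (hx : Pdef φ p x) (hy : Pdef φ q y) : Pdef φ (p + q) z := by
  intro k v hv
  have hz : z = (y * x)⁻¹ * (x * y) := by rw [hxy]; group
  have hzv : (rho φ z - 1) v = rho φ (y * x)⁻¹ (rho φ (x * y) v - rho φ (y * x) v) := by
    rw [map_sub, ← rho_mul, ← hz]
    simp only [LinearMap.sub_apply, Module.End.one_apply, ← rho_mul, inv_mul_cancel_left,
      inv_mul_cancel, rho_one]
  rw [hzv, ← key_comm2]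
  apply Uc_inv
  have h1 : (rho φ y - 1) v ∈ Uc φ (k - q) := hy k v hv
  have h2 : (rho φ x - 1) ((rho φ y - 1) v) ∈ Uc φ (k - q - p) := hx _ _ h1
  have h3 : (rho φ x - 1) v ∈ Uc φ (k - p) := hx k v hv
  have h4 : (rho φ y - 1) ((rho φ x - 1) v) ∈ Uc φ (k - p - q) := hy _ _ h3
  have e1 : k - q - p = k - (p + q) := by omega
  have e2 : k - p - q = k - (p + q) := by omega
  rw [e1] at h2; rw [e2] at h4
  exact sub_mem h2 h4

/-- The key fixed-vector existence lemma. -/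
lemma fv
    (hunip : ∀ (i j : Fin d) (h : i < j),
      IsNilpotent ((φ (EU d i j h) : Matrix (Fin d) (Fin d) ℂ) - 1))
    (U : Submodule ℂ (Fin d → ℂ))
    (hUinv : ∀ (g : unipotentUpper d) (v : Fin d → ℂ), v ∈ U → rho φ g v ∈ U)
    (hUne : U ≠ ⊤) :
    ∀ (m c : ℕ), 1 ≤ c → d ≤ c + m →
      ∃ v, v ∉ U ∧ ∀ (i j : Fin d) (hij : i < j), (i : ℕ) + c ≤ (j : ℕ) →
        (rho φ (EU d i j hij) - 1) v ∈ U := by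
  have hUsub : ∀ (g : unipotentUpper d) (v : Fin d → ℂ), v ∈ U → (rho φ g - 1) v ∈ U := by
    intro g v hv
    rw [key_sub]
    exact sub_mem (hUinv g v hv) hv
  intro m
  induction m with
  | zero =>
    intro c hc hdc
    have hlt : U < (⊤ : Submodule ℂ (Fin d → ℂ)) := lt_top_iff_ne_top.mpr hUne
    obtain ⟨v, _, hv⟩ := SetLike.exists_of_lt hlt
    refine ⟨v, hv, fun i j hij hgap => ?_⟩
    exact absurd hgap (by have := j.isLt; omega)
  | succ m ih =>
    intro c hc hdc
    obtain ⟨v₀, hv₀U, hv₀⟩ := ih (c + 1) (by omega) (by omega)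
    classical
    set X : Submodule ℂ (Fin d → ℂ) :=
      ⨅ (i : Fin d), ⨅ (j : Fin d), ⨅ (hij : i < j), ⨅ (_ : (i : ℕ) + (c + 1) ≤ (j : ℕ)),
        Submodule.comap (rho φ (EU d i j hij) - 1) U with hXdef
    have memX : ∀ v, v ∈ X ↔ ∀ (i j : Fin d) (hij : i < j), (i : ℕ) + (c + 1) ≤ (j : ℕ) →
        (rho φ (EU d i j hij) - 1) v ∈ U := by
      intro v
      simp only [hXdef, Submodule.mem_iInf, Submodule.mem_comap]
    -- conjugating a deep generator by a gap-c generator stays deep (mod U)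
    have conj_mem : ∀ (a b i j : Fin d) (hab : a < b) (hij : i < j),
        (a : ℕ) + (c + 1) ≤ (b : ℕ) → (i : ℕ) + c = (j : ℕ) →
        ∀ v ∈ X, (rho φ ((EU d i j hij)⁻¹ * (EU d a b hab * EU d i j hij)) - 1) v ∈ U := by
      intro a b i j hab hij hgab hgij v hv
      rw [memX] at hv
      by_cases hbi : b = i
      · subst hbi
        have hbr := EU_braid (d := d) hab hij
        have heq : (EU d b j hij)⁻¹ * (EU d a b hab * EU d b j hij)
            = EU d a b hab * EU d a j (hab.trans hij) := by
          rw [hbr]; group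
        rw [heq, key_split]
        refine add_mem (hUinv _ _ ?_) (hv a b hab hgab)
        exact hv a j (hab.trans hij) (by omega)
      · by_cases haj : a = j
        · subst haj
          -- u = EU i a, w = EU a b ; braid (i, a, b)
          have hbr := EU_braid (d := d) hij hab
          have heq : (EU d i a hij)⁻¹ * (EU d a b hab * EU d i a hij)
              = EU d a b hab * (EU d i b (hij.trans hab))⁻¹ := by
            have h1 : EU d a b hab * EU d i a hij
                = EU d i a hij * (EU d a b hab * (EU d i b (hij.trans hab))⁻¹) := by
              rw [show EU d i a hij * (EU d a b hab * (EU d i b (hij.trans hab))⁻¹)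
                  = (EU d i a hij * EU d a b hab) * (EU d i b (hij.trans hab))⁻¹ from by group,
                hbr]
              group
            rw [h1]
            group
          rw [heq, key_split, key_inv]
          refine add_mem (hUinv _ _ (neg_mem (hUinv _ _ ?_))) (hv a b hab hgab)
          exact hv i b (hij.trans hab) (by omega)
        · -- disjoint: they commute
          have hcomm : EU d a b hab * EU d i j hij = EU d i j hij * EU d a b hab :=
            EU_comm hab hij hbi (fun h => haj h.symm)
          have heq : (EU d i j hij)⁻¹ * (EU d a b hab * EU d i j hij) = EU d a b hab := by
            rw [hcomm]; group
          rw [heq]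
          exact hv a b hab hgab
    set s : Finset (Fin d × Fin d) :=
      Finset.univ.filter (fun p => p.1 < p.2 ∧ (p.1 : ℕ) + c = (p.2 : ℕ)) with hsdef
    set T : Fin d × Fin d → Module.End ℂ (Fin d → ℂ) :=
      fun p => if h : p.1 < p.2 then rho φ (EU d p.1 p.2 h) - 1 else 0 with hTdef
    have mem_s : ∀ (i j : Fin d), (i, j) ∈ s ↔ i < j ∧ (i : ℕ) + c = (j : ℕ) := by
      intro i j
      simp [hsdef]
    have hT_eq : ∀ (i j : Fin d) (h : i < j), T (i, j) = rho φ (EU d i j h) - 1 := by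
      intro i j h
      simp only [hTdef]
      exact dif_pos h
    have hX : ∀ p ∈ s, ∀ x ∈ X, T p x ∈ X := by
      intro p hp x hx
      obtain ⟨i, j⟩ := p
      obtain ⟨hlt, hgap⟩ := (mem_s i j).1 hp
      rw [hT_eq i j hlt, memX]
      intro a b hab hgab
      have hsplit : (rho φ (EU d a b hab) - 1) ((rho φ (EU d i j hlt) - 1) x)
          = (rho φ (EU d a b hab) - 1) (rho φ (EU d i j hlt) x)
            - (rho φ (EU d a b hab) - 1) x := by
        rw [key_sub φ (EU d i j hlt), map_sub]
      rw [hsplit]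
      refine sub_mem ?_ ((memX x).1 hx a b hab hgab)
      rw [key_conj]
      exact hUinv _ _ (conj_mem a b i j hab hlt hgab hgap x hx)
    have hUU : ∀ p ∈ s, ∀ u ∈ U, T p u ∈ U := by
      intro p hp u hu
      obtain ⟨i, j⟩ := p
      obtain ⟨hlt, _⟩ := (mem_s i j).1 hp
      rw [hT_eq i j hlt]
      exact hUsub _ _ hu
    have hnilT : ∀ p ∈ s, IsNilpotent (T p) := by
      intro p hp
      obtain ⟨i, j⟩ := p
      obtain ⟨hlt, _⟩ := (mem_s i j).1 hp
      rw [hT_eq i j hlt]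
      exact rho_sub_one_nilp φ hunip i j hlt
    have hcommT : ∀ p ∈ s, ∀ q ∈ s, ∀ x ∈ X, T p (T q x) - T q (T p x) ∈ U := by
      intro p hp q hq x hx
      obtain ⟨i, j⟩ := p
      obtain ⟨k, l⟩ := q
      obtain ⟨hpl, hpgap⟩ := (mem_s i j).1 hp
      obtain ⟨hql, hqgap⟩ := (mem_s k l).1 hq
      rw [hT_eq i j hpl, hT_eq k l hql, key_comm2]
      by_cases hjk : j = k
      · subst hjk
        have hbr := EU_braid (d := d) hpl hql
        rw [hbr, key_step]
        refine hUinv _ _ ((memX x).1 hx i l (hpl.trans hql) (by omega))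
      · by_cases hli : l = i
        · subst hli
          have hbr := EU_braid (d := d) hql hpl
          rw [hbr, ← neg_sub, key_step]
          exact neg_mem (hUinv _ _ ((memX x).1 hx k j (hql.trans hpl) (by omega)))
        · have hcomm : EU d i j hpl * EU d k l hql = EU d k l hql * EU d i j hpl :=
            EU_comm hpl hql hjk hli
          rw [hcomm, sub_self]
          exact zero_mem U
    obtain ⟨x, hxX, hxU, hxT⟩ := exists_common_nilpotent s T X U hX hUU hnilT hcommT
      ⟨v₀, (memX v₀).2 hv₀, hv₀U⟩
    refine ⟨x, hxU, ?_⟩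
    intro i j hij hgap
    by_cases heq : (i : ℕ) + c = (j : ℕ)
    · have hmem : (i, j) ∈ s := (mem_s i j).2 ⟨hij, heq⟩
      have := hxT (i, j) hmem
      rwa [hT_eq i j hij] at this
    · exact (memX x).1 hxX i j hij (by omega)

lemma P_Ead (hd2 : 2 ≤ d) : ∀ (t : ℕ), 1 ≤ t → ∀ (a : ℕ), a + t = d - 1 →
    ∀ (had : a < d) (hd1 : d - 1 < d) (hlt : (⟨a, had⟩ : Fin d) < ⟨d - 1, hd1⟩),
    Pdef φ t (EU d ⟨a, had⟩ ⟨d - 1, hd1⟩ hlt) := by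
  intro t
  induction t with
  | zero => intro h; exact absurd h (by omega)
  | succ t ih =>
    intro _ a ha had hd1 hlt
    by_cases ht0 : t = 0
    · subst ht0
      exact P_one φ _
    · have hb : a + 1 < d := by omega
      have hblt : (⟨a, had⟩ : Fin d) < ⟨a + 1, hb⟩ := Fin.mk_lt_mk.mpr (by omega)
      have hblt2 : (⟨a + 1, hb⟩ : Fin d) < ⟨d - 1, hd1⟩ := Fin.mk_lt_mk.mpr (by omega)
      have hbr := EU_braid (d := d) hblt hblt2
      have hz := P_braid φ hbr (P_one φ _) (ih (by omega) (a + 1) (by omega) hb hd1 hblt2)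
      have h1t : 1 + t = t + 1 := by omega
      rw [h1t] at hz
      exact hz

lemma gens_to_group (U : Submodule ℂ (Fin d → ℂ))
    (hUinv : ∀ (g : unipotentUpper d) (v : Fin d → ℂ), v ∈ U → rho φ g v ∈ U)
    (v : Fin d → ℂ)
    (hv : ∀ (i j : Fin d) (hij : i < j), (rho φ (EU d i j hij) - 1) v ∈ U) :
    ∀ g : unipotentUpper d, (rho φ g - 1) v ∈ U := by
  have main : ∀ (x : Matrix.SpecialLinearGroup (Fin d) ℤ) (hx : x ∈ unipotentUpper d),
      (rho φ ⟨x, hx⟩ - 1) v ∈ U := by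
    intro x hx
    refine Subgroup.closure_induction
      (p := fun y hy => (rho φ ⟨y, hy⟩ - 1) v ∈ U) ?_ ?_ ?_ ?_ hx
    · rintro y ⟨i, j, hij, rfl⟩
      exact hv i j hij
    · show (rho φ 1 - 1) v ∈ U
      have : (rho φ 1 - 1) v = 0 := by
        rw [key_sub, rho_one, sub_self]
      rw [this]
      exact zero_mem U
    · intro y z hy hz py pz
      show (rho φ ((⟨y, hy⟩ : unipotentUpper d) * ⟨z, hz⟩) - 1) v ∈ U
      rw [key_split]
      exact add_mem (hUinv _ _ pz) py
    · intro y hy py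
      show (rho φ ((⟨y, hy⟩ : unipotentUpper d))⁻¹ - 1) v ∈ U
      rw [key_inv]
      exact neg_mem (hUinv _ _ py)
  intro g
  exact main g.1 g.2

lemma Uc_strict
    (hunip : ∀ (i j : Fin d) (h : i < j),
      IsNilpotent ((φ (EU d i j h) : Matrix (Fin d) (Fin d) ℂ) - 1))
    (k : ℕ) (hne : Uc φ k ≠ ⊤) :
    ∃ v, v ∈ Uc φ (k + 1) ∧ v ∉ Uc φ k := by
  obtain ⟨v, hvU, hv⟩ := fv φ hunip (Uc φ k) (Uc_inv φ k) hne d 1 le_rfl (by omega)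
  refine ⟨v, ?_, hvU⟩
  rw [mem_Uc_succ]
  apply gens_to_group φ (Uc φ k) (Uc_inv φ k) v
  intro i j hij
  exact hv i j hij (by exact hij)

end RankOneAux


/-- Let `d ≥ 3` and `φ : U_d → GL_d(ℂ)` be such that `φ(E_{ij})` is unipotent for all `i < j`
and `φ(E_{1d}) ≠ id`. Then `φ(E_{1d}) − id` has rank 1. -/
theorem rank_one_of_unipotent_image (d : ℕ) (hd : 3 ≤ d)
    (φ : unipotentUpper d →* GL (Fin d) ℂ)
    (hunip : ∀ (i j : Fin d) (h : i < j),
      IsNilpotent ((φ (EU d i j h) : Matrix (Fin d) (Fin d) ℂ) - 1))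
    (hne : φ (EU d ⟨0, by omega⟩ ⟨d - 1, by omega⟩ (Fin.mk_lt_mk.mpr (by omega))) ≠ 1) :
    ((φ (EU d ⟨0, by omega⟩ ⟨d - 1, by omega⟩ (Fin.mk_lt_mk.mpr (by omega))) :
        Matrix (Fin d) (Fin d) ℂ) - 1).rank = 1 := by
  classical
  have h0 : (0 : ℕ) < d := by omega
  have hd1 : d - 1 < d := by omega
  have hlt : (⟨0, h0⟩ : Fin d) < ⟨d - 1, hd1⟩ := Fin.mk_lt_mk.mpr (by omega)
  show ((φ (EU d ⟨0, h0⟩ ⟨d - 1, hd1⟩ hlt) : Matrix (Fin d) (Fin d) ℂ) - 1).rank = 1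
  have hne' : φ (EU d ⟨0, h0⟩ ⟨d - 1, hd1⟩ hlt) ≠ 1 := hne
  set g₀ := EU d ⟨0, h0⟩ ⟨d - 1, hd1⟩ hlt with hg
  set N := RankOneAux.rho φ g₀ - 1 with hN
  have hNmat : N = Matrix.mulVecLin ((φ g₀ : Matrix (Fin d) (Fin d) ℂ) - 1) :=
    RankOneAux.rho_sub_one_eq φ g₀
  have hP := RankOneAux.P_Ead φ (by omega) (d - 1) (by omega) 0 (by omega) h0 hd1 hlt
  have hker : RankOneAux.Uc φ (d - 1) ≤ LinearMap.ker N := by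
    intro v hv
    have h2 := hP (d - 1) v hv
    rw [Nat.sub_self] at h2
    rw [LinearMap.mem_ker]
    simpa [RankOneAux.Uc, hN] using h2
  have hM0 : N ≠ 0 := by
    intro h
    apply hne'
    have hz : ((φ g₀ : Matrix (Fin d) (Fin d) ℂ) - 1) = 0 := by
      apply Matrix.toLin'.injective
      rw [Matrix.toLin'_apply', ← hNmat, h]
      simp
    have hM1 : (φ g₀ : Matrix (Fin d) (Fin d) ℂ) = 1 := by rwa [sub_eq_zero] at hz
    exact Units.ext (by rw [hM1]; rfl)
  have hUnetop : RankOneAux.Uc φ (d - 1) ≠ ⊤ := by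
    intro h
    apply hM0
    rw [← LinearMap.ker_eq_top]
    exact top_le_iff.mp (h ▸ hker)
  have hchain : ∀ k, k ≤ d - 1 → k ≤ Module.finrank ℂ (RankOneAux.Uc φ k) := by
    intro k
    induction k with
    | zero => intro _; exact Nat.zero_le _
    | succ k ih =>
      intro hk
      have hkne : RankOneAux.Uc φ k ≠ ⊤ := by
        intro hEq
        apply hUnetop
        have hmono := RankOneAux.Uc_mono φ (show k ≤ d - 1 by omega)
        rw [hEq] at hmono
        exact top_le_iff.mp hmono
      obtain ⟨v, hv1, hv2⟩ := RankOneAux.Uc_strict φ hunip k hkne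
      have hlt2 : RankOneAux.Uc φ k < RankOneAux.Uc φ (k + 1) :=
        lt_of_le_of_ne (RankOneAux.Uc_mono_succ φ k) (fun hEq => hv2 (hEq ▸ hv1))
      have h3 := Submodule.finrank_lt_finrank_of_lt hlt2
      have h4 := ih (by omega)
      omega
  have hrk : d - 1 ≤ Module.finrank ℂ (LinearMap.ker N) :=
    le_trans (hchain (d - 1) le_rfl) (Submodule.finrank_mono hker)
  have hsum := LinearMap.finrank_range_add_finrank_ker N
  have hfin : Module.finrank ℂ (Fin d → ℂ) = d := by
    simp [Module.finrank_pi]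
  rw [hfin] at hsum
  have hrange0 : Module.finrank ℂ (LinearMap.range N) ≠ 0 := by
    intro h
    apply hM0
    rw [← LinearMap.range_eq_bot]
    exact Submodule.finrank_eq_zero.mp h
  have hrank_eq : ((φ g₀ : Matrix (Fin d) (Fin d) ℂ) - 1).rank
      = Module.finrank ℂ (LinearMap.range N) := by
    rw [Matrix.rank, hNmat]
  rw [hrank_eq]
  omega
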